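/- (Theorem 4) For any classification rule h ∈ T(X,Y), define the lower bound R_(U,h) = sup_{μ ∈ ℝ^m} [ 1 − τᵀμ + inf_{(x,y) ∈ X×Y}{Φ(x,y)ᵀμ − h(y|x)} − λᵀ|μ| ] and the upper bound R̄(U,h) = inf_{μ ∈ ℝ^m} [ 1 − τᵀμ + sup_{(x,y) ∈ X×Y}{Φ(x,y)ᵀμ − h(y|x)} + λᵀ|μ| ]. Then for every p ∈ U it holds that R_(U,h) ≤ ℓ(h,p) ≤ R̄(U,h). Moreover, if U satisfies regularity condition R1 or R2, the supremum defining R_(U,h) and the infimum defining R̄(U,h) are attained. -/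

import Mathlib

open MeasureTheory

noncomputable section

/-- A (randomized) classification rule. -/
def IsRule {d K : ℕ} (Xs : Set (Fin d → ℝ)) (h : ↥Xs → Fin K → ℝ) : Prop :=
  (∀ x y, 0 ≤ h x y) ∧ (∀ x, ∑ y, h x y = 1) ∧ ∀ y, Measurable fun x => h x y

/-- Expected 0-1 loss. -/
def loss {d K : ℕ} {Xs : Set (Fin d → ℝ)} (h : ↥Xs → Fin K → ℝ)
    (p : Measure (↥Xs × Fin K)) : ℝ :=
  ∫ z, (1 - h z.1 z.2) ∂p

/-- Uncertainty set. -/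
def Unc {d K m : ℕ} {Xs : Set (Fin d → ℝ)} (Φ : ↥Xs × Fin K → Fin m → ℝ)
    (τ lam : Fin m → ℝ) : Set (Measure (↥Xs × Fin K)) :=
  {p | IsProbabilityMeasure p ∧ ∀ i, |(∫ z, Φ z i ∂p) - τ i| ≤ lam i}

/-- Upper-bound dual objective. -/
def Dup {d K m : ℕ} {Xs : Set (Fin d → ℝ)} (Φ : ↥Xs × Fin K → Fin m → ℝ)
    (τ lam : Fin m → ℝ) (h : ↥Xs → Fin K → ℝ) (μ : Fin m → ℝ) : ℝ :=
  1 - (∑ i, τ i * μ i)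
    + (⨆ z : ↥Xs × Fin K, ((∑ i, Φ z i * μ i) - h z.1 z.2))
    + ∑ i, lam i * |μ i|

/-- Lower-bound dual objective. -/
def Dlow {d K m : ℕ} {Xs : Set (Fin d → ℝ)} (Φ : ↥Xs × Fin K → Fin m → ℝ)
    (τ lam : Fin m → ℝ) (h : ↥Xs → Fin K → ℝ) (μ : Fin m → ℝ) : ℝ :=
  1 - (∑ i, τ i * μ i)
    + (⨅ z : ↥Xs × Fin K, ((∑ i, Φ z i * μ i) - h z.1 z.2))
    - ∑ i, lam i * |μ i|

/-- Regularity condition R1. -/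
def CondR1 {d K m : ℕ} (Xs : Set (Fin d → ℝ)) (Φ : ↥Xs × Fin K → Fin m → ℝ)
    (τ lam : Fin m → ℝ) : Prop :=
  Xs.Finite ∧ (Unc Φ τ lam).Nonempty

/-- Regularity condition R2. -/
def CondR2 {d K m : ℕ} (Xs : Set (Fin d → ℝ)) (Φ : ↥Xs × Fin K → Fin m → ℝ)
    (τ lam : Fin m → ℝ) : Prop :=
  ∃ p ∈ Unc Φ τ lam,
    (∀ i, 0 < lam i → |(∫ z, Φ z i ∂p) - τ i| < lam i) ∧
    ((∀ i, 0 < lam i) ∨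
      ∀ W : AffineSubspace ℝ (Fin m → ℝ), (W : Set (Fin m → ℝ)) ≠ Set.univ →
        ¬ (∀ᵐ z ∂p, Φ z ∈ (W : Set (Fin m → ℝ))))


namespace Stmt8Aux

open Finset

lemma l1_ge_norm {m : ℕ} (μ : Fin m → ℝ) : ‖μ‖ ≤ ∑ i, |μ i| := by
  refine (pi_norm_le_iff_of_nonneg (by positivity)).2 fun i => ?_
  simpa [Real.norm_eq_abs] using
    Finset.single_le_sum (f := fun i => |μ i|) (fun j _ => abs_nonneg _) (Finset.mem_univ i)

lemma real_iSup_neg {Z : Type*} (g : Z → ℝ) : (⨆ z, -g z) = -⨅ z, g z := by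
  have hr : Set.range (fun z => -g z) = -Set.range g := by
    ext x
    simp only [Set.mem_range, Set.mem_neg]
    constructor
    · rintro ⟨z, rfl⟩; exact ⟨z, by ring⟩
    · rintro ⟨z, hz⟩; exact ⟨z, by linarith⟩
  rw [iSup, iInf, hr, Real.sInf_def, neg_neg]

lemma real_ciSup_add {Z : Type*} [Nonempty Z] (g : Z → ℝ) (hbdd : BddAbove (Set.range g))
    (a : ℝ) : (⨆ z, (g z + a)) = (⨆ z, g z) + a := by
  apply le_antisymm
  · exact ciSup_le fun z => add_le_add_left (le_ciSup hbdd z) a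
  · have hbdd' : BddAbove (Set.range fun z => g z + a) := by
      obtain ⟨ub, hub⟩ := hbdd
      exact ⟨ub + a, by rintro x ⟨z, rfl⟩; exact add_le_add_left (hub ⟨z, rfl⟩) a⟩
    have h1 : ∀ z, g z ≤ (⨆ z, (g z + a)) - a :=
      fun z => le_sub_iff_add_le.2 (le_ciSup hbdd' z)
    linarith [ciSup_le h1]

lemma ciSup_eq_sup' {Z : Type*} [Fintype Z] [Nonempty Z] (f : Z → ℝ) :
    (⨆ z, f z) = Finset.univ.sup' Finset.univ_nonempty f := by
  apply le_antisymm
  · exact ciSup_le fun z => Finset.le_sup' f (Finset.mem_univ z)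
  · exact Finset.sup'_le _ _ fun z _ => le_ciSup (Set.Finite.bddAbove (Set.finite_range f)) z

lemma nonempty_of_prob {Z : Type*} [MeasurableSpace Z] (p : Measure Z)
    [IsProbabilityMeasure p] : Nonempty Z := by
  by_contra hcon
  rw [not_nonempty_iff] at hcon
  have h1 : p Set.univ = 1 := measure_univ
  rw [show (Set.univ : Set Z) = ∅ from Set.eq_empty_of_isEmpty _, measure_empty] at h1
  exact zero_ne_one h1

lemma integrable_bdd {Z : Type*} [MeasurableSpace Z] {p : Measure Z} [IsProbabilityMeasure p]
    {g : Z → ℝ} (hm : Measurable g) {C : ℝ} (hb : ∀ z, |g z| ≤ C) : Integrable g p :=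
  (integrable_const C).mono' hm.aestronglyMeasurable
    (Filter.Eventually.of_forall fun z => by simpa [Real.norm_eq_abs] using hb z)

lemma integral_le_ciSup {Z : Type*} [MeasurableSpace Z] {p : Measure Z} [IsProbabilityMeasure p]
    {g : Z → ℝ} (hint : Integrable g p) (hbdd : BddAbove (Set.range g)) :
    ∫ z, g z ∂p ≤ ⨆ z, g z := by
  have hne : Nonempty Z := nonempty_of_prob p
  calc ∫ z, g z ∂p ≤ ∫ _z, (⨆ w, g w) ∂p :=
        integral_mono hint (integrable_const _) (fun z => le_ciSup hbdd z)
    _ = ⨆ w, g w := by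
        rw [integral_const, probReal_univ, one_smul]

lemma mu_dot_bound {m : ℕ} (τ lam E : Fin m → ℝ) (hfeas : ∀ i, |E i - τ i| ≤ lam i)
    (μ : Fin m → ℝ) :
    -(∑ i, lam i * |μ i|) ≤ (∑ i, E i * μ i) - ∑ i, τ i * μ i ∧
      (∑ i, E i * μ i) - ∑ i, τ i * μ i ≤ ∑ i, lam i * |μ i| := by
  have h : |(∑ i, E i * μ i) - ∑ i, τ i * μ i| ≤ ∑ i, lam i * |μ i| := by
    rw [← Finset.sum_sub_distrib]
    refine le_trans (Finset.abs_sum_le_sum_abs _ _) (Finset.sum_le_sum fun i _ => ?_)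
    rw [show E i * μ i - τ i * μ i = (E i - τ i) * μ i from by ring, abs_mul]
    exact mul_le_mul_of_nonneg_right (hfeas i) (abs_nonneg _)
  exact abs_le.1 h

lemma coercive_min {m : ℕ} (f : (Fin m → ℝ) → ℝ) (hcont : Continuous f) (c₀ : ℝ)
    (hc₀ : 0 < c₀) (hcoer : ∀ μ, c₀ * ‖μ‖ ≤ f μ) : ∃ μ₀, ∀ μ, f μ₀ ≤ f μ := by
  have hf0 : 0 ≤ f 0 := by simpa using hcoer 0
  set R : ℝ := f 0 / c₀ + 1 with hR
  have hR0 : 0 < R := by positivity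
  have hball : IsCompact (Metric.closedBall (0 : Fin m → ℝ) R) := isCompact_closedBall _ _
  have hne : (Metric.closedBall (0 : Fin m → ℝ) R).Nonempty :=
    ⟨0, Metric.mem_closedBall_self hR0.le⟩
  obtain ⟨μ₀, hμ₀K, hmin⟩ := hball.exists_isMinOn hne hcont.continuousOn
  refine ⟨μ₀, fun μ => ?_⟩
  by_cases hK : μ ∈ Metric.closedBall (0 : Fin m → ℝ) R
  · exact hmin hK
  · have hnorm : R < ‖μ‖ := by
      simpa [Metric.mem_closedBall, dist_zero_right] using hK
    have h1 : f μ₀ ≤ f 0 := hmin (Metric.mem_closedBall_self hR0.le)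
    have h2 : c₀ * R = f 0 + c₀ := by rw [hR, mul_add, mul_div_cancel₀ _ hc₀.ne', mul_one]
    have h3 : c₀ * R < c₀ * ‖μ‖ := by nlinarith
    linarith [hcoer μ]


section OneD

variable {J : Type}

lemma case_nonneg (s : Finset J) (hs : s.Nonempty) (c dd : J → ℝ) (G : ℝ)
    (hc : ∀ j ∈ s, 0 ≤ c j) (hz : ∀ j ∈ s, c j = 0 → dd j ≤ G) :
    ∃ t, s.sup' hs (fun j => c j * t + dd j) ≤ G := by
  classical
  by_cases hp : (s.filter (fun j => c j ≠ 0)).Nonempty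
  · refine ⟨(s.filter (fun j => c j ≠ 0)).inf' hp (fun j => (G - dd j) / c j), ?_⟩
    refine Finset.sup'_le _ _ fun j hj => ?_
    by_cases h0 : c j = 0
    · simpa [h0] using hz j hj h0
    · have hcj : 0 < c j := lt_of_le_of_ne (hc j hj) (Ne.symm h0)
      have ht : (s.filter (fun j => c j ≠ 0)).inf' hp (fun j => (G - dd j) / c j)
          ≤ (G - dd j) / c j := Finset.inf'_le _ (Finset.mem_filter.2 ⟨hj, h0⟩)
      have h2 := mul_le_mul_of_nonneg_left ht hcj.le
      rw [mul_div_cancel₀ _ (ne_of_gt hcj)] at h2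
      linarith
  · refine ⟨0, Finset.sup'_le _ _ fun j hj => ?_⟩
    have h0 : c j = 0 := by
      by_contra hcj
      exact hp ⟨j, Finset.mem_filter.2 ⟨hj, hcj⟩⟩
    rw [h0]
    simpa using hz j hj h0

lemma case_nonpos (s : Finset J) (hs : s.Nonempty) (c dd : J → ℝ) (G : ℝ)
    (hc : ∀ j ∈ s, c j ≤ 0) (hz : ∀ j ∈ s, c j = 0 → dd j ≤ G) :
    ∃ t, s.sup' hs (fun j => c j * t + dd j) ≤ G := by
  obtain ⟨t, ht⟩ := case_nonneg s hs (fun j => -c j) dd G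
    (fun j hj => neg_nonneg.2 (hc j hj))
    (fun j hj h0 => hz j hj (by linarith [neg_eq_zero.1 h0]))
  refine ⟨-t, ?_⟩
  have he : (fun j => c j * (-t) + dd j) = fun j => -c j * t + dd j := by
    funext j; ring
  rw [he]
  exact ht

lemma cont_lines (s : Finset J) (hs : s.Nonempty) (c dd : J → ℝ) :
    Continuous fun t => s.sup' hs fun j => c j * t + dd j := by
  refine continuous_iff_continuousAt.2 fun t => ?_
  exact ContinuousAt.finset_sup'_apply hs fun j _ =>
    (((continuous_const.mul continuous_id).add continuous_const).continuousAt)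

lemma perturb (s : Finset J) (hs : s.Nonempty) (c dd : J → ℝ) (t σ : ℝ) (hσ : |σ| = 1)
    (hact : ∀ j ∈ s, c j * t + dd j = s.sup' hs (fun j => c j * t + dd j) → 0 < σ * c j) :
    ∃ u, s.sup' hs (fun j => c j * u + dd j) < s.sup' hs (fun j => c j * t + dd j) := by
  classical
  set φ := s.sup' hs (fun j => c j * t + dd j) with hφ
  set na := s.filter (fun j => c j * t + dd j ≠ φ) with hna
  set δ : ℝ := if hne : na.Nonempty then
      min 1 (na.inf' hne (fun j => (φ - (c j * t + dd j)) / (1 + |c j|))) else 1 with hδ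
  have hδpos : 0 < δ := by
    rw [hδ]
    split_ifs with hne
    · refine lt_min one_pos ?_
      refine (Finset.lt_inf'_iff _).2 fun j hj => ?_
      have hj' := Finset.mem_filter.1 hj
      have hle : c j * t + dd j ≤ φ := by rw [hφ]; exact Finset.le_sup' (fun j => c j * t + dd j) hj'.1
      have hlt : c j * t + dd j < φ := lt_of_le_of_ne hle hj'.2
      have : 0 < 1 + |c j| := by positivity
      exact div_pos (by linarith) this
    · exact one_pos
  have hδna : ∀ j ∈ s, c j * t + dd j ≠ φ → δ * (1 + |c j|) ≤ φ - (c j * t + dd j) := by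
    intro j hj hne0
    have hmem : j ∈ na := Finset.mem_filter.2 ⟨hj, hne0⟩
    have hne : na.Nonempty := ⟨j, hmem⟩
    have h1 : δ ≤ (φ - (c j * t + dd j)) / (1 + |c j|) := by
      rw [hδ, dif_pos hne]
      exact le_trans (min_le_right _ _) (Finset.inf'_le _ hmem)
    have h2 : (0:ℝ) < 1 + |c j| := by positivity
    calc δ * (1 + |c j|) ≤ ((φ - (c j * t + dd j)) / (1 + |c j|)) * (1 + |c j|) :=
          mul_le_mul_of_nonneg_right h1 h2.le
      _ = φ - (c j * t + dd j) := div_mul_cancel₀ _ (ne_of_gt h2)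
  refine ⟨t - σ * δ, ?_⟩
  rw [Finset.sup'_lt_iff]
  intro j hj
  have hexp : c j * (t - σ * δ) + dd j = (c j * t + dd j) - σ * c j * δ := by ring
  by_cases hac : c j * t + dd j = φ
  · have h1 := hact j hj hac
    have h2 : 0 < σ * c j * δ := mul_pos h1 hδpos
    rw [hexp, hac]
    linarith
  · have hle : c j * t + dd j ≤ φ := by rw [hφ]; exact Finset.le_sup' (fun j => c j * t + dd j) hj
    have h2 := hδna j hj hac
    have habs : -(δ * |c j|) ≤ σ * c j * δ := by
      have h3 : |σ * c j * δ| = δ * |c j| := by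
        rw [abs_mul, abs_mul, hσ, abs_of_pos hδpos]; ring
      linarith [neg_abs_le (σ * c j * δ)]
    rw [hexp]
    have h4 : δ * (1 + |c j|) = δ + δ * |c j| := by ring
    linarith

lemma case_mixed (s : Finset J) (hs : s.Nonempty) (c dd : J → ℝ) (G : ℝ)
    (hz : ∀ j ∈ s, c j = 0 → dd j ≤ G)
    (hpair : ∀ j ∈ s, ∀ k ∈ s, 0 < c j → c k < 0 →
      (-(c k) / (c j - c k)) * dd j + (c j / (c j - c k)) * dd k ≤ G)
    (jp : J) (hjp : jp ∈ s) (hcp : 0 < c jp) (jn : J) (hjn : jn ∈ s) (hcn : c jn < 0) :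
    ∃ t, s.sup' hs (fun j => c j * t + dd j) ≤ G := by
  classical
  set φ : ℝ → ℝ := fun t => s.sup' hs (fun j => c j * t + dd j) with hφ
  have hcont : Continuous φ := cont_lines s hs c dd
  have hles : ∀ (t : ℝ) (j), j ∈ s → c j * t + dd j ≤ φ t := by
    intro t j hj
    simp only [hφ]
    exact Finset.le_sup' (fun j => c j * t + dd j) hj
  set Tp := (φ 0 - dd jp) / c jp with hTp
  set Tn := (φ 0 - dd jn) / c jn with hTn
  have hout : ∀ t, t ∉ Set.Icc (min Tn 0) (max Tp 0) → φ 0 < φ t := by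
    intro t ht
    rw [Set.mem_Icc, not_and_or] at ht
    rcases ht with ht | ht
    · push_neg at ht
      have htn : t < Tn := lt_of_lt_of_le ht (min_le_left _ _)
      have h1 : c jn * Tn = φ 0 - dd jn := mul_div_cancel₀ _ (ne_of_lt hcn)
      have h2 : c jn * Tn < c jn * t := by
        exact mul_lt_mul_of_neg_left htn hcn
      have h3 : c jn * t + dd jn ≤ φ t := hles t jn hjn
      linarith
    · push_neg at ht
      have htp : Tp < t := lt_of_le_of_lt (le_max_left _ _) ht
      have h1 : c jp * Tp = φ 0 - dd jp := mul_div_cancel₀ _ (ne_of_gt hcp)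
      have h2 : c jp * Tp < c jp * t := by
        exact mul_lt_mul_of_pos_left htp hcp
      have h3 : c jp * t + dd jp ≤ φ t := hles t jp hjp
      linarith
  have hKne : (Set.Icc (min Tn 0) (max Tp 0)).Nonempty :=
    ⟨0, Set.mem_Icc.2 ⟨min_le_right _ _, le_max_right _ _⟩⟩
  obtain ⟨t₀, ht₀K, ht₀⟩ := isCompact_Icc.exists_isMinOn hKne hcont.continuousOn
  have hmin : ∀ t, φ t₀ ≤ φ t := by
    intro t
    by_cases htK : t ∈ Set.Icc (min Tn 0) (max Tp 0)
    · exact ht₀ htK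
    · exact le_trans (ht₀ ⟨min_le_right _ _, le_max_right _ _⟩) (hout t htK).le
  -- analyze active set at t₀
  by_cases hza : ∃ j ∈ s, c j = 0 ∧ c j * t₀ + dd j = φ t₀
  · obtain ⟨j, hj, h0, hval⟩ := hza
    refine ⟨t₀, ?_⟩
    have h6 : φ t₀ = dd j := by rw [← hval, h0]; ring
    have h5 : s.sup' hs (fun j => c j * t₀ + dd j) = dd j := by
      rw [← h6]
    rw [h5]
    exact hz j hj h0
  by_cases hpa : (∃ j ∈ s, 0 < c j ∧ c j * t₀ + dd j = φ t₀) ∧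
      (∃ k ∈ s, c k < 0 ∧ c k * t₀ + dd k = φ t₀)
  · obtain ⟨⟨j, hj, hcj, hvj⟩, ⟨k, hk, hck, hvk⟩⟩ := hpa
    refine ⟨t₀, ?_⟩
    have hd : 0 < c j - c k := by linarith
    have key : (-(c k) / (c j - c k)) * dd j + (c j / (c j - c k)) * dd k = φ t₀ := by
      have h1 : dd j = φ t₀ - c j * t₀ := by linarith
      have h2 : dd k = φ t₀ - c k * t₀ := by linarith
      rw [h1, h2]
      field_simp
      ring
    have h7 := hpair j hj k hk hcj hck
    have h5 : s.sup' hs (fun j => c j * t₀ + dd j) = φ t₀ := by simp only [hφ]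
    rw [h5, ← key]
    exact h7
  · exfalso
    obtain ⟨j₀, hj₀, hval₀⟩ := Finset.exists_mem_eq_sup' hs (fun j => c j * t₀ + dd j)
    have hval₀' : c j₀ * t₀ + dd j₀ = φ t₀ := hval₀.symm
    have hj₀ne : c j₀ ≠ 0 := fun h0 => hza ⟨j₀, hj₀, h0, hval₀'⟩
    rw [not_and_or] at hpa
    rcases lt_or_gt_of_ne hj₀ne with hneg | hpos
    · -- j₀ active with negative slope ⇒ no positive active ⇒ all active negative
      have hnopos : ¬ ∃ j ∈ s, 0 < c j ∧ c j * t₀ + dd j = φ t₀ := by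
        rcases hpa with h | h
        · exact h
        · exact absurd ⟨j₀, hj₀, hneg, hval₀'⟩ h
      have hact : ∀ j ∈ s, c j * t₀ + dd j = φ t₀ → 0 < (-1 : ℝ) * c j := by
        intro j hj hval
        have h0 : c j ≠ 0 := fun h0 => hza ⟨j, hj, h0, hval⟩
        rcases lt_or_gt_of_ne h0 with h | h
        · linarith
        · exact absurd ⟨j, hj, h, hval⟩ hnopos
      obtain ⟨u, hu⟩ := perturb s hs c dd t₀ (-1) (by norm_num) hact
      exact absurd (hmin u) (not_le.2 hu)
    · have honeg : ¬ ∃ k ∈ s, c k < 0 ∧ c k * t₀ + dd k = φ t₀ := by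
        rcases hpa with h | h
        · exact absurd ⟨j₀, hj₀, hpos, hval₀'⟩ h
        · exact h
      have hact : ∀ j ∈ s, c j * t₀ + dd j = φ t₀ → 0 < (1 : ℝ) * c j := by
        intro j hj hval
        have h0 : c j ≠ 0 := fun h0 => hza ⟨j, hj, h0, hval⟩
        rcases lt_or_gt_of_ne h0 with h | h
        · exact absurd ⟨j, hj, h, hval⟩ honeg
        · linarith
      obtain ⟨u, hu⟩ := perturb s hs c dd t₀ 1 (by norm_num) hact
      exact absurd (hmin u) (not_le.2 hu)

end OneD


lemma fm_min : ∀ (m : ℕ) (J : Type) (s : Finset J) (hs : s.Nonempty)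
    (a : J → Fin m → ℝ) (b : J → ℝ) (L : ℝ),
    (∀ μ : Fin m → ℝ, L ≤ s.sup' hs fun j => (∑ i, a j i * μ i) + b j) →
    ∃ μ₀ : Fin m → ℝ, ∀ μ : Fin m → ℝ, (s.sup' hs fun j => (∑ i, a j i * μ₀ i) + b j)
        ≤ s.sup' hs fun j => (∑ i, a j i * μ i) + b j := by
  intro m
  induction m with
  | zero =>
    intro J s hs a b L _
    refine ⟨fun i => i.elim0, fun μ => le_of_eq ?_⟩
    have hμ : μ = fun i => i.elim0 := funext fun i => i.elim0
    rw [hμ]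
  | succ m IH =>
    intro J s hs a b L hL
    classical
    set c : J → ℝ := fun j => a j 0 with hc
    set dd : (Fin m → ℝ) → J → ℝ := fun μ' j => (∑ i, a j i.succ * μ' i) + b j with hdd
    have hexp : ∀ (t : ℝ) (μ' : Fin m → ℝ) (j : J),
        (∑ i, a j i * (Fin.cons t μ' : Fin (m+1) → ℝ) i) + b j = c j * t + dd μ' j := by
      intro t μ' j
      rw [Fin.sum_univ_succ]
      simp only [Fin.cons_zero, Fin.cons_succ, hc, hdd]
      ring
    have hsup_eq : ∀ (t : ℝ) (μ' : Fin m → ℝ),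
        (s.sup' hs fun j => (∑ i, a j i * (Fin.cons t μ' : Fin (m+1) → ℝ) i) + b j)
          = s.sup' hs (fun j => c j * t + dd μ' j) :=
      fun t μ' => Finset.sup'_congr hs rfl (fun j _ => hexp t μ' j)
    set wj : J × J → ℝ := fun q => -(c q.2) / (c q.1 - c q.2) with hwj
    set wk : J × J → ℝ := fun q => c q.1 / (c q.1 - c q.2) with hwk
    set a' : J ⊕ (J × J) → Fin m → ℝ := fun x i =>
      Sum.elim (fun j => a j i.succ)
        (fun q => wj q * a q.1 i.succ + wk q * a q.2 i.succ) x with ha'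
    set b' : J ⊕ (J × J) → ℝ :=
      Sum.elim b (fun q => wj q * b q.1 + wk q * b q.2) with hb'
    set s' : Finset (J ⊕ (J × J)) :=
      ((s.filter (fun j => c j = 0)).image Sum.inl) ∪
        (((s ×ˢ s).filter (fun q => 0 < c q.1 ∧ c q.2 < 0)).image Sum.inr) with hs'def
    have hmem_inl : ∀ j, j ∈ s → c j = 0 → Sum.inl j ∈ s' := by
      intro j hj h0
      rw [hs'def]
      exact Finset.mem_union_left _
        (Finset.mem_image.2 ⟨j, Finset.mem_filter.2 ⟨hj, h0⟩, rfl⟩)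
    have hmem_inr : ∀ j k, j ∈ s → k ∈ s → 0 < c j → c k < 0 → Sum.inr (j, k) ∈ s' := by
      intro j k hj hk hcj hck
      rw [hs'def]
      refine Finset.mem_union_right _ (Finset.mem_image.2 ⟨(j, k), ?_, rfl⟩)
      exact Finset.mem_filter.2 ⟨Finset.mem_product.2 ⟨hj, hk⟩, hcj, hck⟩
    have hs'ne : s'.Nonempty := by
      by_cases hz0 : ∃ j ∈ s, c j = 0
      · obtain ⟨j, hj, h0⟩ := hz0
        exact ⟨Sum.inl j, hmem_inl j hj h0⟩
      push_neg at hz0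
      by_cases hneg : ∃ j ∈ s, c j < 0
      · by_cases hposx : ∃ j ∈ s, 0 < c j
        · obtain ⟨j, hj, hcj⟩ := hposx
          obtain ⟨k, hk, hck⟩ := hneg
          exact ⟨Sum.inr (j, k), hmem_inr j k hj hk hcj hck⟩
        · exfalso
          push_neg at hposx
          have hallneg : ∀ j ∈ s, c j < 0 := fun j hj =>
            lt_of_le_of_ne (hposx j hj) (hz0 j hj)
          set t := s.sup' hs (fun j => (L - 1 - b j) / c j) with ht
          have hLe := hL (Fin.cons t 0)
          rw [hsup_eq t 0] at hLe
          have hle2 : s.sup' hs (fun j => c j * t + dd 0 j) ≤ L - 1 := by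
            refine Finset.sup'_le _ _ fun j hj => ?_
            have hcj : c j < 0 := hallneg j hj
            have ht1 : (L - 1 - b j) / c j ≤ t := by
              rw [ht]; exact Finset.le_sup' (fun j => (L - 1 - b j) / c j) hj
            have h2 := mul_le_mul_of_nonpos_left ht1 hcj.le
            rw [mul_div_cancel₀ _ (ne_of_lt hcj)] at h2
            have hdd0 : dd 0 j = b j := by simp [hdd]
            linarith
          linarith
      · exfalso
        push_neg at hneg
        have hallpos : ∀ j ∈ s, 0 < c j := fun j hj =>
          lt_of_le_of_ne (hneg j hj) (Ne.symm (hz0 j hj))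
        set t := s.inf' hs (fun j => (L - 1 - b j) / c j) with ht
        have hLe := hL (Fin.cons t 0)
        rw [hsup_eq t 0] at hLe
        have hle2 : s.sup' hs (fun j => c j * t + dd 0 j) ≤ L - 1 := by
          refine Finset.sup'_le _ _ fun j hj => ?_
          have hcj : 0 < c j := hallpos j hj
          have ht1 : t ≤ (L - 1 - b j) / c j := by
            rw [ht]; exact Finset.inf'_le _ hj
          have h2 := mul_le_mul_of_nonneg_left ht1 hcj.le
          rw [mul_div_cancel₀ _ (ne_of_gt hcj)] at h2
          have hdd0 : dd 0 j = b j := by simp [hdd]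
          linarith
        linarith
    -- value of inr elements
    have hval_inr : ∀ (μ' : Fin m → ℝ) (j k : J),
        (∑ i, a' (Sum.inr (j, k)) i * μ' i) + b' (Sum.inr (j, k))
          = wj (j, k) * dd μ' j + wk (j, k) * dd μ' k := by
      intro μ' j k
      simp only [ha', hb', Sum.elim_inr, hdd]
      have e : (∑ i, (wj (j, k) * a j i.succ + wk (j, k) * a k i.succ) * μ' i)
          = wj (j, k) * (∑ i, a j i.succ * μ' i) + wk (j, k) * (∑ i, a k i.succ * μ' i) := by
        rw [Finset.mul_sum, Finset.mul_sum, ← Finset.sum_add_distrib]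
        exact Finset.sum_congr rfl fun i _ => by ring
      rw [e]
      ring
    have hval_inl : ∀ (μ' : Fin m → ℝ) (j : J),
        (∑ i, a' (Sum.inl j) i * μ' i) + b' (Sum.inl j) = dd μ' j := by
      intro μ' j
      simp only [ha', hb', Sum.elim_inl, hdd]
    set G : (Fin m → ℝ) → ℝ :=
      fun μ' => s'.sup' hs'ne (fun x => (∑ i, a' x i * μ' i) + b' x) with hG
    have claimA : ∀ (μ' : Fin m → ℝ) (t : ℝ),
        G μ' ≤ s.sup' hs (fun j => c j * t + dd μ' j) := by
      intro μ' t
      rw [hG]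
      refine Finset.sup'_le _ _ fun x hx => ?_
      rw [hs'def] at hx
      rcases Finset.mem_union.1 hx with hx | hx
      · obtain ⟨j, hjf, rfl⟩ := Finset.mem_image.1 hx
        obtain ⟨hj, h0⟩ := Finset.mem_filter.1 hjf
        rw [hval_inl]
        calc dd μ' j = c j * t + dd μ' j := by rw [h0]; ring
          _ ≤ _ := Finset.le_sup' (fun j => c j * t + dd μ' j) hj
      · obtain ⟨q, hqf, rfl⟩ := Finset.mem_image.1 hx
        obtain ⟨hq, hcj, hck⟩ := Finset.mem_filter.1 hqf
        obtain ⟨hj, hk⟩ := Finset.mem_product.1 hq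
        obtain ⟨j, k⟩ := q
        rw [hval_inr]
        have hd : 0 < c j - c k := by dsimp only at hcj hck; linarith
        have hwj0 : 0 ≤ wj (j, k) := by
          rw [hwj]; exact div_nonneg (by dsimp only at hck ⊢; linarith) hd.le
        have hwk0 : 0 ≤ wk (j, k) := by
          rw [hwk]; exact div_nonneg (by dsimp only at hcj ⊢; linarith) hd.le
        have hsum1 : wj (j, k) + wk (j, k) = 1 := by
          rw [hwj, hwk]; field_simp; ring
        have hslope : wj (j, k) * c j + wk (j, k) * c k = 0 := by
          rw [hwj, hwk]; field_simp; ring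
        have h1 : c j * t + dd μ' j ≤ s.sup' hs (fun j => c j * t + dd μ' j) :=
          Finset.le_sup' (fun j => c j * t + dd μ' j) hj
        have h2 : c k * t + dd μ' k ≤ s.sup' hs (fun j => c j * t + dd μ' j) :=
          Finset.le_sup' (fun j => c j * t + dd μ' j) hk
        have p1 := mul_le_mul_of_nonneg_left h1 hwj0
        have p2 := mul_le_mul_of_nonneg_left h2 hwk0
        have e2 : wj (j, k) * (c j * t + dd μ' j) + wk (j, k) * (c k * t + dd μ' k)
            = wj (j, k) * dd μ' j + wk (j, k) * dd μ' k
              + t * (wj (j, k) * c j + wk (j, k) * c k) := by ring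
        rw [hslope] at e2
        have e3 : wj (j, k) * s.sup' hs (fun j => c j * t + dd μ' j)
            + wk (j, k) * s.sup' hs (fun j => c j * t + dd μ' j)
            = s.sup' hs (fun j => c j * t + dd μ' j) := by
          rw [← add_mul, hsum1, one_mul]
        linarith
    have claimB : ∀ μ' : Fin m → ℝ, ∃ t, s.sup' hs (fun j => c j * t + dd μ' j) ≤ G μ' := by
      intro μ'
      have hzG : ∀ j ∈ s, c j = 0 → dd μ' j ≤ G μ' := by
        intro j hj h0
        have hx := hmem_inl j hj h0
        have := Finset.le_sup' (fun x => (∑ i, a' x i * μ' i) + b' x) hx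
        rw [hval_inl] at this
        rw [hG]
        exact this
      by_cases hneg : ∃ j ∈ s, c j < 0
      · by_cases hpos : ∃ j ∈ s, 0 < c j
        · obtain ⟨jn, hjn, hcn⟩ := hneg
          obtain ⟨jp, hjp, hcp⟩ := hpos
          refine case_mixed s hs c (dd μ') (G μ') hzG ?_ jp hjp hcp jn hjn hcn
          intro j hj k hk hcj hck
          have hx := hmem_inr j k hj hk hcj hck
          have hv := Finset.le_sup' (fun x => (∑ i, a' x i * μ' i) + b' x) hx
          rw [hval_inr] at hv
          rw [hG]
          have hwjval : wj (j, k) = -(c k) / (c j - c k) := by rw [hwj]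
          have hwkval : wk (j, k) = c j / (c j - c k) := by rw [hwk]
          rw [hwjval, hwkval] at hv
          exact hv
        · push_neg at hpos
          exact case_nonpos s hs c (dd μ') (G μ') (fun j hj => hpos j hj) hzG
      · push_neg at hneg
        exact case_nonneg s hs c (dd μ') (G μ') (fun j hj => hneg j hj) hzG
    have hGlb : ∀ μ' : Fin m → ℝ, L ≤ G μ' := by
      intro μ'
      obtain ⟨t, ht⟩ := claimB μ'
      have h1 := hL (Fin.cons t μ')
      rw [hsup_eq t μ'] at h1
      linarith
    obtain ⟨μ'₀, hμ'₀⟩ := IH (J ⊕ (J × J)) s' hs'ne a' b' L hGlb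
    obtain ⟨t₀, ht₀⟩ := claimB μ'₀
    refine ⟨Fin.cons t₀ μ'₀, fun μ => ?_⟩
    rw [hsup_eq t₀ μ'₀]
    have h2 : G μ'₀ ≤ G (Fin.tail μ) := hμ'₀ (Fin.tail μ)
    have h3 : G (Fin.tail μ) ≤ s.sup' hs fun j => (∑ i, a j i * μ i) + b j := by
      have h4 := claimA (Fin.tail μ) (μ 0)
      rw [← hsup_eq (μ 0) (Fin.tail μ), Fin.cons_self_tail] at h4
      exact h4
    linarith


lemma exists_min_F {Z : Type} [MeasurableSpace Z] {m : ℕ}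
    (Φ : Z → Fin m → ℝ) (B : ℝ) (hB : ∀ z i, |Φ z i| ≤ B)
    (hΦm : ∀ i, Measurable fun z => Φ z i)
    (τ lam : Fin m → ℝ) (c : Z → ℝ) (hc0 : ∀ z, 0 ≤ c z) (hc1 : ∀ z, c z ≤ 1)
    (hcm : Measurable c)
    (p : Measure Z) (hp : IsProbabilityMeasure p)
    (hfeas : ∀ i, |(∫ z, Φ z i ∂p) - τ i| ≤ lam i)
    (hcond : Finite Z ∨
      ((∀ i, 0 < lam i → |(∫ z, Φ z i ∂p) - τ i| < lam i) ∧
        ((∀ i, 0 < lam i) ∨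
          ∀ W : AffineSubspace ℝ (Fin m → ℝ), (W : Set (Fin m → ℝ)) ≠ Set.univ →
            ¬ ∀ᵐ z ∂p, Φ z ∈ (W : Set (Fin m → ℝ))))) :
    ∃ μ₀ : Fin m → ℝ, ∀ μ : Fin m → ℝ,
      (-(∑ i, τ i * μ₀ i) + (⨆ z, ((∑ i, Φ z i * μ₀ i) + c z)) + ∑ i, lam i * |μ₀ i|)
        ≤ -(∑ i, τ i * μ i) + (⨆ z, ((∑ i, Φ z i * μ i) + c z)) + ∑ i, lam i * |μ i| := by
  haveI := hp
  have hne : Nonempty Z := nonempty_of_prob p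
  set E : Fin m → ℝ := fun i => ∫ z, Φ z i ∂p with hE
  set F : (Fin m → ℝ) → ℝ := fun μ =>
    -(∑ i, τ i * μ i) + (⨆ z, ((∑ i, Φ z i * μ i) + c z)) + ∑ i, lam i * |μ i| with hF
  show ∃ μ₀, ∀ μ, F μ₀ ≤ F μ
  have hlam0 : ∀ i, 0 ≤ lam i := fun i => le_trans (abs_nonneg _) (hfeas i)
  have hbddA : ∀ μ : Fin m → ℝ, BddAbove (Set.range fun z => (∑ i, Φ z i * μ i) + c z) := by
    intro μ
    refine ⟨(∑ i, B * |μ i|) + 1, ?_⟩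
    rintro x ⟨z, rfl⟩
    refine add_le_add (Finset.sum_le_sum fun i _ => ?_) (hc1 z)
    exact le_trans (le_abs_self _)
      (by rw [abs_mul]; exact mul_le_mul_of_nonneg_right (hB z i) (abs_nonneg _))
  have hintΦ : ∀ i, Integrable (fun z => Φ z i) p :=
    fun i => integrable_bdd (hΦm i) (fun z => hB z i)
  have hintdot : ∀ μ : Fin m → ℝ, Integrable (fun z => ∑ i, Φ z i * μ i) p := fun μ =>
    integrable_finset_sum _ fun i _ => (hintΦ i).mul_const _
  have hEdot : ∀ μ : Fin m → ℝ, ∫ z, (∑ i, Φ z i * μ i) ∂p = ∑ i, E i * μ i := by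
    intro μ
    rw [integral_finset_sum _ fun i _ => (hintΦ i).mul_const _]
    exact Finset.sum_congr rfl fun i _ => integral_mul_const _ _
  have hintc : Integrable c p :=
    integrable_bdd hcm (C := 1) fun z => abs_le.2 ⟨by linarith [hc0 z], hc1 z⟩
  have hsup_ge : ∀ μ : Fin m → ℝ, (∑ i, E i * μ i) ≤ ⨆ z, ((∑ i, Φ z i * μ i) + c z) := by
    intro μ
    rw [← hEdot μ]
    calc ∫ z, (∑ i, Φ z i * μ i) ∂p ≤ ∫ z, ((∑ i, Φ z i * μ i) + c z) ∂p :=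
          integral_mono (hintdot μ) ((hintdot μ).add hintc) (fun z => by linarith [hc0 z])
      _ ≤ _ := integral_le_ciSup ((hintdot μ).add hintc) (hbddA μ)
  have hkey : ∀ μ : Fin m → ℝ, 0 ≤ (∑ i, E i * μ i) - (∑ i, τ i * μ i) + ∑ i, lam i * |μ i| := by
    intro μ
    have h1 := (mu_dot_bound τ lam E (fun i => hfeas i) μ).1
    linarith
  have hF0 : ∀ μ, 0 ≤ F μ := by
    intro μ
    simp only [hF]
    have h1 := hsup_ge μ
    have h2 := hkey μ
    linarith
  rcases Nat.eq_zero_or_pos m with hm0 | hm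
  · refine ⟨0, fun μ => ?_⟩
    have hμ0 : μ = 0 := funext fun i => by exfalso; have := i.isLt; omega
    rw [hμ0]
  rcases hcond with hfin | hcond2
  · -- finite case: Fourier–Motzkin
    haveI := hfin
    haveI : Fintype Z := Fintype.ofFinite Z
    classical
    set sg : (Fin m → Bool) → Fin m → ℝ := fun s i => if s i then lam i else -lam i with hsg
    set aJ : Z × (Fin m → Bool) → Fin m → ℝ := fun x i => Φ x.1 i - τ i + sg x.2 i with haJ
    set bJ : Z × (Fin m → Bool) → ℝ := fun x => c x.1 with hbJ
    have hrep : ∀ μ : Fin m → ℝ, F μ =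
        Finset.univ.sup' Finset.univ_nonempty
          (fun x : Z × (Fin m → Bool) => (∑ i, aJ x i * μ i) + bJ x) := by
      intro μ
      apply le_antisymm
      · obtain ⟨z0, _, hz0⟩ := Finset.exists_mem_eq_sup'
          (Finset.univ_nonempty (α := Z)) (fun z => (∑ i, Φ z i * μ i) + c z)
        set s0 : Fin m → Bool := fun i => decide (0 ≤ μ i) with hs0
        have hsgmu : ∀ i, sg s0 i * μ i = lam i * |μ i| := by
          intro i
          by_cases h : 0 ≤ μ i
          · have hb : s0 i = true := by simp [hs0, h]
            simp [hsg, hb, abs_of_nonneg h]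
          · push_neg at h
            have hb : s0 i = false := by simp [hs0, h.not_ge]
            simp only [hsg, hb, Bool.false_eq_true, if_false]
            rw [abs_of_neg h]; ring
        have hvalue : (∑ i, aJ (z0, s0) i * μ i) + bJ (z0, s0)
            = ((∑ i, Φ z0 i * μ i) + c z0) - (∑ i, τ i * μ i) + ∑ i, lam i * |μ i| := by
          simp only [haJ, hbJ]
          have h1 : ∀ i, (Φ z0 i - τ i + sg s0 i) * μ i
              = Φ z0 i * μ i - τ i * μ i + sg s0 i * μ i := fun i => by ring
          rw [Finset.sum_congr rfl fun i _ => h1 i, Finset.sum_add_distrib,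
            Finset.sum_sub_distrib, Finset.sum_congr rfl fun i _ => hsgmu i]
          ring
        have hFeq : F μ = (∑ i, aJ (z0, s0) i * μ i) + bJ (z0, s0) := by
          simp only [hF]
          rw [hvalue, ciSup_eq_sup' (fun z => (∑ i, Φ z i * μ i) + c z), hz0]
          ring
        rw [hFeq]
        exact Finset.le_sup' (fun x => (∑ i, aJ x i * μ i) + bJ x) (Finset.mem_univ _)
      · refine Finset.sup'_le _ _ fun x _ => ?_
        obtain ⟨z, sb⟩ := x
        have h1 : ∀ i, sg sb i * μ i ≤ lam i * |μ i| := by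
          intro i
          by_cases h : sb i = true
          · simp only [hsg, h, if_true]
            exact mul_le_mul_of_nonneg_left (le_abs_self _) (hlam0 i)
          · simp only [hsg, h, if_false]
            calc -lam i * μ i = lam i * (-μ i) := by ring
              _ ≤ lam i * |μ i| := mul_le_mul_of_nonneg_left (neg_le_abs _) (hlam0 i)
        have h2 : (∑ i, Φ z i * μ i) + c z ≤ ⨆ w, ((∑ i, Φ w i * μ i) + c w) :=
          le_ciSup (hbddA μ) z
        have hval2 : (∑ i, aJ (z, sb) i * μ i) + bJ (z, sb)
            = ((∑ i, Φ z i * μ i) + c z) - (∑ i, τ i * μ i) + ∑ i, sg sb i * μ i := by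
          simp only [haJ, hbJ]
          have h4 : ∀ i, (Φ z i - τ i + sg sb i) * μ i
              = Φ z i * μ i - τ i * μ i + sg sb i * μ i := fun i => by ring
          rw [Finset.sum_congr rfl fun i _ => h4 i, Finset.sum_add_distrib,
            Finset.sum_sub_distrib]
          ring
        have h3 : ∑ i, sg sb i * μ i ≤ ∑ i, lam i * |μ i| :=
          Finset.sum_le_sum fun i _ => h1 i
        rw [hval2]
        simp only [hF]
        linarith
    obtain ⟨μ₀, hμ₀⟩ := fm_min m (Z × (Fin m → Bool)) Finset.univ Finset.univ_nonempty
      aJ bJ 0 (fun μ => by rw [← hrep]; exact hF0 μ)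
    exact ⟨μ₀, fun μ => by rw [hrep, hrep]; exact hμ₀ μ⟩
  · -- coercive cases
    obtain ⟨hstrict, hor⟩ := hcond2
    have hB0 : 0 ≤ B := le_trans (abs_nonneg _) (hB (Classical.arbitrary Z) ⟨0, hm⟩)
    have hmB : (0:ℝ) < ↑m * B + 1 := by
      have : (0:ℝ) ≤ ↑m * B := mul_nonneg (Nat.cast_nonneg m) hB0
      linarith
    have hcont_gen : ∀ GGf : (Fin m → ℝ) → ℝ,
        (∀ μ ν, GGf μ - GGf ν ≤ ∑ i, B * |μ i - ν i|) → Continuous GGf := by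
      intro GGf hlip
      rw [Metric.continuous_iff]
      intro ν ε hε
      refine ⟨ε / (↑m * B + 1), by positivity, fun μ hdist => ?_⟩
      have hd0 : 0 ≤ dist μ ν := dist_nonneg
      have h1 : ∀ i, |μ i - ν i| ≤ dist μ ν := by
        intro i
        rw [← Real.dist_eq]
        exact dist_le_pi_dist μ ν i
      have h2 : ∑ i, B * |μ i - ν i| ≤ ↑m * B * dist μ ν := by
        calc ∑ i, B * |μ i - ν i| ≤ ∑ _i : Fin m, B * dist μ ν :=
              Finset.sum_le_sum fun i _ => mul_le_mul_of_nonneg_left (h1 i) hB0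
          _ = ↑m * B * dist μ ν := by
              rw [Finset.sum_const, Finset.card_univ, Fintype.card_fin, nsmul_eq_mul]; ring
      rw [Real.dist_eq]
      have he : ∑ i, B * |ν i - μ i| = ∑ i, B * |μ i - ν i| :=
        Finset.sum_congr rfl fun i _ => by rw [abs_sub_comm]
      have habs : |GGf μ - GGf ν| ≤ ∑ i, B * |μ i - ν i| := by
        rw [abs_sub_le_iff]
        refine ⟨hlip μ ν, ?_⟩
        have := hlip ν μ
        linarith
      have h4 : (↑m * B + 1) * (ε / (↑m * B + 1)) = ε := by field_simp
      have h5 : (↑m * B + 1) * dist μ ν < ε := by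
        calc (↑m * B + 1) * dist μ ν < (↑m * B + 1) * (ε / (↑m * B + 1)) :=
              mul_lt_mul_of_pos_left hdist hmB
          _ = ε := h4
      nlinarith [habs, h2]
    have hlipGG : ∀ μ ν : Fin m → ℝ,
        (⨆ z, ((∑ i, Φ z i * μ i) + c z)) - (⨆ z, ((∑ i, Φ z i * ν i) + c z))
          ≤ ∑ i, B * |μ i - ν i| := by
      intro μ ν
      rw [sub_le_iff_le_add]
      refine ciSup_le fun z => ?_
      have h1 : ∀ i, Φ z i * μ i - Φ z i * ν i ≤ B * |μ i - ν i| := by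
        intro i
        have e : Φ z i * μ i - Φ z i * ν i = Φ z i * (μ i - ν i) := by ring
        rw [e]
        calc Φ z i * (μ i - ν i) ≤ |Φ z i * (μ i - ν i)| := le_abs_self _
          _ = |Φ z i| * |μ i - ν i| := abs_mul _ _
          _ ≤ B * |μ i - ν i| := mul_le_mul_of_nonneg_right (hB z i) (abs_nonneg _)
      have hsum := Finset.sum_le_sum fun i (_ : i ∈ Finset.univ) => h1 i
      rw [Finset.sum_sub_distrib] at hsum
      have h2 : (∑ i, Φ z i * ν i) + c z ≤ ⨆ w, ((∑ i, Φ w i * ν i) + c w) :=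
        le_ciSup (hbddA ν) z
      linarith
    have hcontF : Continuous F := by
      simp only [hF]
      refine Continuous.add (Continuous.add ?_ (hcont_gen _ hlipGG)) ?_
      · exact (continuous_finset_sum Finset.univ fun i _ =>
          continuous_const.mul (continuous_apply i)).neg
      · exact continuous_finset_sum Finset.univ fun i _ =>
          continuous_const.mul ((continuous_apply i).abs)
    rcases hor with hall | haff
    · -- all lam positive, strict feasibility
      haveI : Nonempty (Fin m) := ⟨⟨0, hm⟩⟩
      set ε : ℝ := Finset.univ.inf' Finset.univ_nonempty (fun i => lam i - |E i - τ i|) with hεd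
      have hε : 0 < ε := by
        rw [hεd]
        refine (Finset.lt_inf'_iff _).2 fun i _ => ?_
        have := hstrict i (hall i)
        linarith
      refine coercive_min F hcontF ε hε fun μ => ?_
      have h1 : ∀ i, ε * |μ i| ≤ lam i * |μ i| + (E i * μ i - τ i * μ i) := by
        intro i
        have h2 : ε ≤ lam i - |E i - τ i| := by
          rw [hεd]; exact Finset.inf'_le _ (Finset.mem_univ i)
        have h3 : -(|E i - τ i| * |μ i|) ≤ E i * μ i - τ i * μ i := by
          have h4 := neg_abs_le ((E i - τ i) * μ i)
          rw [abs_mul] at h4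
          nlinarith [h4]
        nlinarith [mul_le_mul_of_nonneg_right h2 (abs_nonneg (μ i))]
      have hsum := Finset.sum_le_sum fun i (_ : i ∈ Finset.univ) => h1 i
      rw [← Finset.mul_sum, Finset.sum_add_distrib, Finset.sum_sub_distrib] at hsum
      have h5 : ε * ‖μ‖ ≤ ε * ∑ i, |μ i| := mul_le_mul_of_nonneg_left (l1_ge_norm μ) hε.le
      have h6 := hsup_ge μ
      simp only [hF]
      linarith
    · -- affine-support case
      haveI : Nonempty (Fin m) := ⟨⟨0, hm⟩⟩
      have hbdd0 : ∀ μ : Fin m → ℝ, BddAbove (Set.range fun z => ∑ i, Φ z i * μ i) := by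
        intro μ
        refine ⟨∑ i, B * |μ i|, ?_⟩
        rintro x ⟨z, rfl⟩
        exact Finset.sum_le_sum fun i _ => le_trans (le_abs_self _)
          (by rw [abs_mul]; exact mul_le_mul_of_nonneg_right (hB z i) (abs_nonneg _))
      set G0 : (Fin m → ℝ) → ℝ := fun μ => ⨆ z, ∑ i, Φ z i * μ i with hG0
      set g0 : (Fin m → ℝ) → ℝ := fun μ => G0 μ - ∑ i, E i * μ i with hg0
      have hG0ge : ∀ (μ : Fin m → ℝ) z, (∑ i, Φ z i * μ i) ≤ G0 μ := by
        intro μ z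
        simp only [hG0]
        exact le_ciSup (hbdd0 μ) z
      have hg0nn : ∀ μ, 0 ≤ g0 μ := by
        intro μ
        simp only [hg0]
        have h1 : (∑ i, E i * μ i) ≤ G0 μ := by
          rw [← hEdot μ]
          simp only [hG0]
          exact integral_le_ciSup (hintdot μ) (hbdd0 μ)
        linarith
      have hFg : ∀ μ, g0 μ ≤ F μ := by
        intro μ
        have h1 : G0 μ ≤ ⨆ z, ((∑ i, Φ z i * μ i) + c z) := by
          simp only [hG0]
          exact ciSup_le fun z =>
            le_trans (le_add_of_nonneg_right (hc0 z)) (le_ciSup (hbddA μ) z)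
        have h2 := hkey μ
        simp only [hg0, hF]
        linarith
      have hlip0 : ∀ μ ν : Fin m → ℝ, G0 μ - G0 ν ≤ ∑ i, B * |μ i - ν i| := by
        intro μ ν
        simp only [hG0]
        rw [sub_le_iff_le_add]
        refine ciSup_le fun z => ?_
        have h1 : ∀ i, Φ z i * μ i - Φ z i * ν i ≤ B * |μ i - ν i| := by
          intro i
          have e : Φ z i * μ i - Φ z i * ν i = Φ z i * (μ i - ν i) := by ring
          rw [e]
          calc Φ z i * (μ i - ν i) ≤ |Φ z i * (μ i - ν i)| := le_abs_self _
            _ = |Φ z i| * |μ i - ν i| := abs_mul _ _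
            _ ≤ B * |μ i - ν i| := mul_le_mul_of_nonneg_right (hB z i) (abs_nonneg _)
        have hsum := Finset.sum_le_sum fun i (_ : i ∈ Finset.univ) => h1 i
        rw [Finset.sum_sub_distrib] at hsum
        have h2 : (∑ i, Φ z i * ν i) ≤ ⨆ w, ∑ i, Φ w i * ν i := le_ciSup (hbdd0 ν) z
        linarith
      have hcontg0 : Continuous g0 := by
        simp only [hg0]
        exact (hcont_gen G0 hlip0).sub
          (continuous_finset_sum Finset.univ fun i _ => continuous_const.mul (continuous_apply i))
      have hdotsmul : ∀ (r : ℝ) (μ : Fin m → ℝ) z,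
          (∑ i, Φ z i * (r • μ) i) = r * ∑ i, Φ z i * μ i := by
        intro r μ z
        rw [Finset.mul_sum]
        refine Finset.sum_congr rfl fun i _ => ?_
        simp only [Pi.smul_apply, smul_eq_mul]
        ring
      have hG0hom : ∀ (r : ℝ), 0 < r → ∀ μ, G0 (r • μ) = r * G0 μ := by
        intro r hr μ
        have h1 : G0 (r • μ) ≤ r * G0 μ := by
          simp only [hG0]
          refine ciSup_le fun z => ?_
          rw [hdotsmul]
          exact mul_le_mul_of_nonneg_left (hG0ge μ z) hr.le
        have h2 : G0 μ ≤ r⁻¹ * G0 (r • μ) := by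
          conv_lhs => simp only [hG0]
          refine ciSup_le fun z => ?_
          have h3 : (∑ i, Φ z i * μ i) = r⁻¹ * ∑ i, Φ z i * ((r • μ) i) := by
            rw [hdotsmul, ← mul_assoc, inv_mul_cancel₀ hr.ne', one_mul]
          rw [h3]
          exact mul_le_mul_of_nonneg_left (hG0ge (r • μ) z) (by positivity)
        have h4 := mul_le_mul_of_nonneg_left h2 hr.le
        rw [← mul_assoc, mul_inv_cancel₀ hr.ne', one_mul] at h4
        linarith
      have hg0hom : ∀ (r : ℝ), 0 < r → ∀ μ, g0 (r • μ) = r * g0 μ := by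
        intro r hr μ
        simp only [hg0]
        rw [hG0hom r hr μ]
        have h1 : (∑ i, E i * ((r • μ) i)) = r * ∑ i, E i * μ i := by
          rw [Finset.mul_sum]
          refine Finset.sum_congr rfl fun i _ => ?_
          simp only [Pi.smul_apply, smul_eq_mul]
          ring
        rw [h1]
        ring
      have hg0pos : ∀ μ : Fin m → ℝ, μ ≠ 0 → 0 < g0 μ := by
        intro μ hμ
        rcases lt_or_eq_of_le (hg0nn μ) with h | h
        · exact h
        exfalso
        have hint2 : Integrable (fun z => G0 μ - ∑ i, Φ z i * μ i) p :=
          (integrable_const _).sub (hintdot μ)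
        have heq : ∫ z, (G0 μ - ∑ i, Φ z i * μ i) ∂p = 0 := by
          rw [integral_sub (integrable_const _) (hintdot μ), integral_const, probReal_univ,
            one_smul, hEdot μ]
          simp only [hg0] at h
          linarith
        have hae := (integral_eq_zero_iff_of_nonneg_ae
          (Filter.Eventually.of_forall fun z => sub_nonneg.2 (hG0ge μ z)) hint2).1 heq
        obtain ⟨i₀, hi₀⟩ : ∃ i, μ i ≠ 0 := by
          by_contra hcon; push_neg at hcon; exact hμ (funext hcon)
        set W : AffineSubspace ℝ (Fin m → ℝ) :=
          { carrier := {v | (∑ i, v i * μ i) = G0 μ}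
            smul_vsub_vadd_mem' := by
              intro r v1 v2 v3 h1 h2 h3
              simp only [Set.mem_setOf_eq] at h1 h2 h3 ⊢
              have he : ∀ i, (r • (v1 -ᵥ v2) +ᵥ v3) i * μ i
                  = r * (v1 i * μ i) - r * (v2 i * μ i) + v3 i * μ i := by
                intro i
                simp only [vsub_eq_sub, vadd_eq_add, Pi.add_apply, Pi.smul_apply,
                  Pi.sub_apply, smul_eq_mul]
                ring
              rw [Finset.sum_congr rfl fun i _ => he i, Finset.sum_add_distrib,
                Finset.sum_sub_distrib, ← Finset.mul_sum, ← Finset.mul_sum, h1, h2, h3]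
              ring } with hW
        have hWmem : ∀ v : Fin m → ℝ, v ∈ (W : Set (Fin m → ℝ)) ↔ (∑ i, v i * μ i) = G0 μ := by
          intro v
          rfl
        have hWne : (W : Set (Fin m → ℝ)) ≠ Set.univ := by
          intro hU
          have hv : (fun i => if i = i₀ then (G0 μ + 1) / μ i₀ else 0) ∈ (W : Set (Fin m → ℝ)) := by
            rw [hU]; exact Set.mem_univ _
          rw [hWmem] at hv
          rw [Finset.sum_eq_single i₀ (fun i _ hne => by rw [if_neg hne, zero_mul])
            (fun hni => absurd (Finset.mem_univ i₀) hni)] at hv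
          rw [if_pos rfl, div_mul_cancel₀ _ hi₀] at hv
          linarith
        refine haff W hWne ?_
        filter_upwards [hae] with z hz
        rw [hWmem]
        have hz' : G0 μ - ∑ i, Φ z i * μ i = 0 := hz
        linarith
      have hsphne : (Metric.sphere (0 : Fin m → ℝ) 1).Nonempty := by
        refine ⟨fun _ => 1, ?_⟩
        rw [Metric.mem_sphere, dist_zero_right]
        apply le_antisymm
        · exact (pi_norm_le_iff_of_nonneg (by norm_num)).2 fun i => by simp
        · have := norm_le_pi_norm (fun _ : Fin m => (1:ℝ)) (Classical.arbitrary (Fin m))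
          simpa using this
      obtain ⟨u₀, hu₀s, hu₀min⟩ := (isCompact_sphere (0 : Fin m → ℝ) 1).exists_isMinOn
        hsphne hcontg0.continuousOn
      have hu₀ne : u₀ ≠ 0 := by
        intro h0
        have h1 : ‖u₀‖ = 1 := by simpa [dist_zero_right] using hu₀s
        rw [h0, norm_zero] at h1
        norm_num at h1
      have hc₀ : 0 < g0 u₀ := hg0pos u₀ hu₀ne
      refine coercive_min F hcontF (g0 u₀) hc₀ fun μ => ?_
      rcases eq_or_ne μ 0 with rfl | hμ
      · rw [norm_zero, mul_zero]
        exact le_trans (hg0nn 0) (hFg 0)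
      · have hn : 0 < ‖μ‖ := norm_pos_iff.2 hμ
        have hrepμ : μ = ‖μ‖ • (‖μ‖⁻¹ • μ) := by
          rw [smul_smul, mul_inv_cancel₀ hn.ne', one_smul]
        have hunit : (‖μ‖⁻¹ • μ) ∈ Metric.sphere (0 : Fin m → ℝ) 1 := by
          rw [Metric.mem_sphere, dist_zero_right, norm_smul, norm_inv, norm_norm,
            inv_mul_cancel₀ hn.ne']
        have h1 : g0 u₀ ≤ g0 (‖μ‖⁻¹ • μ) := hu₀min hunit
        have h2 : g0 μ = ‖μ‖ * g0 (‖μ‖⁻¹ • μ) := by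
          conv_lhs => rw [hrepμ]
          exact hg0hom ‖μ‖ hn _
        have h3 := hFg μ
        have h4 := mul_le_mul_of_nonneg_left h1 hn.le
        calc g0 u₀ * ‖μ‖ = ‖μ‖ * g0 u₀ := by ring
          _ ≤ ‖μ‖ * g0 (‖μ‖⁻¹ • μ) := h4
          _ = g0 μ := h2.symm
          _ ≤ F μ := h3


end Stmt8Aux

open Stmt8Aux

/-- Theorem 4: `R_(U,h) = sup_μ Dlow(μ)` and `R̄(U,h) = inf_μ Dup(μ)` sandwich the expected
0-1 loss over all distributions in `U`; under R1 or R2 the sup and inf are attained. -/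
theorem stmt_8 {d K m : ℕ} (hK : 0 < K)
    (Xs : Set (Fin d → ℝ)) (hXs : MeasurableSet Xs)
    (Φ : ↥Xs × Fin K → Fin m → ℝ) (hΦmeas : ∀ i, Measurable fun z => Φ z i)
    (B : ℝ) (hΦbdd : ∀ z i, |Φ z i| ≤ B)
    (τ lam : Fin m → ℝ)
    (h : ↥Xs → Fin K → ℝ) (hrule : IsRule Xs h) :
    (∀ p ∈ Unc Φ τ lam,
      (⨆ μ : Fin m → ℝ, Dlow Φ τ lam h μ) ≤ loss h p ∧
      loss h p ≤ ⨅ μ : Fin m → ℝ, Dup Φ τ lam h μ) ∧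
    ((CondR1 Xs Φ τ lam ∨ CondR2 Xs Φ τ lam) →
      (∃ μl : Fin m → ℝ, Dlow Φ τ lam h μl = ⨆ μ : Fin m → ℝ, Dlow Φ τ lam h μ) ∧
      (∃ μu : Fin m → ℝ, Dup Φ τ lam h μu = ⨅ μ : Fin m → ℝ, Dup Φ τ lam h μ)) := by
  obtain ⟨hpos, hsum, hmeas⟩ := hrule
  have hh1 : ∀ z : ↥Xs × Fin K, h z.1 z.2 ≤ 1 := by
    intro z
    calc h z.1 z.2 ≤ ∑ y : Fin K, h z.1 y :=
          Finset.single_le_sum (f := fun y : Fin K => h z.1 y)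
            (fun y _ => hpos z.1 y) (Finset.mem_univ z.2)
      _ = 1 := hsum _
  have hhm : Measurable fun z : ↥Xs × Fin K => h z.1 z.2 := by
    exact measurable_from_prod_countable_left fun y => hmeas y
  constructor
  · -- Part A: sandwich
    rintro p ⟨hp, hfeas⟩
    haveI := hp
    haveI hne : Nonempty (↥Xs × Fin K) := nonempty_of_prob p
    have hintΦ : ∀ i, Integrable (fun z : ↥Xs × Fin K => Φ z i) p :=
      fun i => integrable_bdd (hΦmeas i) (fun z => hΦbdd z i)
    have hinth : Integrable (fun z : ↥Xs × Fin K => h z.1 z.2) p :=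
      integrable_bdd hhm (C := 1) fun z => abs_le.2 ⟨by linarith [hpos z.1 z.2], hh1 z⟩
    have hloss : loss h p = 1 - ∫ z, h z.1 z.2 ∂p := by
      rw [loss, integral_sub (integrable_const 1) hinth, integral_const, probReal_univ]
      simp
    have hdotint : ∀ μ : Fin m → ℝ, Integrable (fun z : ↥Xs × Fin K => ∑ i, Φ z i * μ i) p :=
      fun μ => integrable_finset_sum _ fun i _ => (hintΦ i).mul_const _
    have hEdot : ∀ μ : Fin m → ℝ,
        ∫ z, (∑ i, Φ z i * μ i) ∂p = ∑ i, (∫ z, Φ z i ∂p) * μ i := by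
      intro μ
      rw [integral_finset_sum _ fun i _ => (hintΦ i).mul_const _]
      exact Finset.sum_congr rfl fun i _ => integral_mul_const _ _
    have hμb := fun μ => mu_dot_bound τ lam (fun i => ∫ z, Φ z i ∂p) hfeas μ
    constructor
    · refine ciSup_le fun μ => ?_
      set I : ℝ := ⨅ z : ↥Xs × Fin K, ((∑ i, Φ z i * μ i) - h z.1 z.2) with hI
      have hbddb : BddBelow (Set.range fun z : ↥Xs × Fin K =>
          (∑ i, Φ z i * μ i) - h z.1 z.2) := by
        refine ⟨-(∑ i, B * |μ i|) - 1, ?_⟩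
        rintro x ⟨z, rfl⟩
        show -(∑ i, B * |μ i|) - 1 ≤ (∑ i, Φ z i * μ i) - h z.1 z.2
        have h1 : ∀ i, -(B * |μ i|) ≤ Φ z i * μ i := by
          intro i
          have := neg_abs_le (Φ z i * μ i)
          rw [abs_mul] at this
          nlinarith [mul_le_mul_of_nonneg_right (hΦbdd z i) (abs_nonneg (μ i))]
        have hsum2 := Finset.sum_le_sum fun i (_ : i ∈ Finset.univ) => h1 i
        rw [Finset.sum_neg_distrib] at hsum2
        have := hh1 z
        linarith
      have hIle : ∀ z : ↥Xs × Fin K, I ≤ (∑ i, Φ z i * μ i) - h z.1 z.2 := by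
        intro z
        rw [hI]
        exact ciInf_le hbddb z
      have hint1 : ∫ z, h z.1 z.2 ∂p ≤ (∑ i, (∫ z, Φ z i ∂p) * μ i) - I := by
        have h2 : ∀ z : ↥Xs × Fin K, h z.1 z.2 ≤ (∑ i, Φ z i * μ i) - I :=
          fun z => by linarith [hIle z]
        calc ∫ z, h z.1 z.2 ∂p ≤ ∫ z, ((∑ i, Φ z i * μ i) - I) ∂p :=
              integral_mono hinth ((hdotint μ).sub (integrable_const _)) h2
          _ = (∑ i, (∫ z, Φ z i ∂p) * μ i) - I := by
              rw [integral_sub (hdotint μ) (integrable_const _), hEdot, integral_const,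
                probReal_univ, one_smul]
      rw [Dlow, hloss]
      have h3 := (hμb μ).2
      linarith
    · refine le_ciInf fun μ => ?_
      set S : ℝ := ⨆ z : ↥Xs × Fin K, ((∑ i, Φ z i * μ i) - h z.1 z.2) with hS
      have hbdda : BddAbove (Set.range fun z : ↥Xs × Fin K =>
          (∑ i, Φ z i * μ i) - h z.1 z.2) := by
        refine ⟨∑ i, B * |μ i|, ?_⟩
        rintro x ⟨z, rfl⟩
        show (∑ i, Φ z i * μ i) - h z.1 z.2 ≤ ∑ i, B * |μ i|
        have h1 : ∀ i, Φ z i * μ i ≤ B * |μ i| := by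
          intro i
          exact le_trans (le_abs_self _)
            (by rw [abs_mul]; exact mul_le_mul_of_nonneg_right (hΦbdd z i) (abs_nonneg _))
        have hsum2 := Finset.sum_le_sum fun i (_ : i ∈ Finset.univ) => h1 i
        have := hpos z.1 z.2
        linarith
      have hSge : ∀ z : ↥Xs × Fin K, (∑ i, Φ z i * μ i) - h z.1 z.2 ≤ S := by
        intro z
        rw [hS]
        exact le_ciSup hbdda z
      have hint2 : (∑ i, (∫ z, Φ z i ∂p) * μ i) - S ≤ ∫ z, h z.1 z.2 ∂p := by
        have h2 : ∀ z : ↥Xs × Fin K, (∑ i, Φ z i * μ i) - S ≤ h z.1 z.2 :=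
          fun z => by linarith [hSge z]
        calc (∑ i, (∫ z, Φ z i ∂p) * μ i) - S
            = ∫ z, ((∑ i, Φ z i * μ i) - S) ∂p := by
              rw [integral_sub (hdotint μ) (integrable_const _), hEdot, integral_const,
                probReal_univ, one_smul]
          _ ≤ ∫ z, h z.1 z.2 ∂p :=
              integral_mono ((hdotint μ).sub (integrable_const _)) hinth h2
      rw [Dup, hloss]
      have h3 := (hμb μ).1
      linarith
  · -- Part B: attainment
    intro hcond
    obtain ⟨p, hp, hfeas, hcond'⟩ : ∃ p : Measure (↥Xs × Fin K), IsProbabilityMeasure p ∧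
        (∀ i, |(∫ z, Φ z i ∂p) - τ i| ≤ lam i) ∧
        (Finite (↥Xs × Fin K) ∨
          ((∀ i, 0 < lam i → |(∫ z, Φ z i ∂p) - τ i| < lam i) ∧
            ((∀ i, 0 < lam i) ∨
              ∀ W : AffineSubspace ℝ (Fin m → ℝ), (W : Set (Fin m → ℝ)) ≠ Set.univ →
                ¬ ∀ᵐ z ∂p, Φ z ∈ (W : Set (Fin m → ℝ))))) := by
      rcases hcond with ⟨hXfin, ⟨p, hp, hfeas⟩⟩ | ⟨p, ⟨hp, hfeas⟩, hstrict, hor⟩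
      · refine ⟨p, hp, hfeas, Or.inl ?_⟩
        haveI := hXfin.to_subtype
        infer_instance
      · exact ⟨p, hp, hfeas, Or.inr ⟨hstrict, hor⟩⟩
    haveI := hp
    haveI hne : Nonempty (↥Xs × Fin K) := nonempty_of_prob p
    have hbdda : ∀ μ : Fin m → ℝ, BddAbove (Set.range fun z : ↥Xs × Fin K =>
        (∑ i, Φ z i * μ i) - h z.1 z.2) := by
      intro μ
      refine ⟨∑ i, B * |μ i|, ?_⟩
      rintro x ⟨z, rfl⟩
      show (∑ i, Φ z i * μ i) - h z.1 z.2 ≤ ∑ i, B * |μ i|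
      have h1 : ∀ i, Φ z i * μ i ≤ B * |μ i| := by
        intro i
        exact le_trans (le_abs_self _)
          (by rw [abs_mul]; exact mul_le_mul_of_nonneg_right (hΦbdd z i) (abs_nonneg _))
      have hsum2 := Finset.sum_le_sum fun i (_ : i ∈ Finset.univ) => h1 i
      have := hpos z.1 z.2
      linarith
    constructor
    · -- Dlow sup attained
      obtain ⟨νl, hνl⟩ := exists_min_F Φ B hΦbdd hΦmeas τ lam
        (fun z => h z.1 z.2) (fun z => hpos z.1 z.2) (fun z => hh1 z) hhm p hp hfeas hcond'
      have hDlow : ∀ μ : Fin m → ℝ, Dlow Φ τ lam h μ =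
          1 - (-(∑ i, τ i * (-μ) i)
            + (⨆ z : ↥Xs × Fin K, ((∑ i, Φ z i * (-μ) i) + h z.1 z.2))
            + ∑ i, lam i * |(-μ) i|) := by
        intro μ
        have hsneg : ∀ z : ↥Xs × Fin K, (∑ i, Φ z i * (-μ) i) = -(∑ i, Φ z i * μ i) := by
          intro z
          rw [← Finset.sum_neg_distrib]
          exact Finset.sum_congr rfl fun i _ => by simp [mul_neg]
        have h3 : (⨆ z : ↥Xs × Fin K, ((∑ i, Φ z i * (-μ) i) + h z.1 z.2))
            = -(⨅ z : ↥Xs × Fin K, ((∑ i, Φ z i * μ i) - h z.1 z.2)) := by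
          rw [← real_iSup_neg (fun z : ↥Xs × Fin K => (∑ i, Φ z i * μ i) - h z.1 z.2)]
          congr 1
          funext z
          rw [hsneg z]
          ring
        have h4 : (∑ i, τ i * (-μ) i) = -(∑ i, τ i * μ i) := by
          rw [← Finset.sum_neg_distrib]
          exact Finset.sum_congr rfl fun i _ => by simp [mul_neg]
        have h5 : (∑ i, lam i * |(-μ) i|) = ∑ i, lam i * |μ i| := by
          refine Finset.sum_congr rfl fun i _ => ?_
          rw [show ((-μ) i) = -(μ i) from rfl, abs_neg]
        rw [Dlow, h3, h4, h5]
        ring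
      refine ⟨-νl, ?_⟩
      have hub : ∀ μ : Fin m → ℝ, Dlow Φ τ lam h μ ≤ Dlow Φ τ lam h (-νl) := by
        intro μ
        rw [hDlow μ, hDlow (-νl), neg_neg]
        have := hνl (-μ)
        linarith
      exact le_antisymm
        (le_ciSup ⟨Dlow Φ τ lam h (-νl), by rintro x ⟨μ, rfl⟩; exact hub μ⟩ (-νl))
        (ciSup_le hub)
    · -- Dup inf attained
      obtain ⟨μu, hμu⟩ := exists_min_F Φ B hΦbdd hΦmeas τ lam
        (fun z => 1 - h z.1 z.2) (fun z => by show (0:ℝ) ≤ 1 - h z.1 z.2; linarith [hh1 z])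
        (fun z => by show (1:ℝ) - h z.1 z.2 ≤ 1; linarith [hpos z.1 z.2]) (measurable_const.sub hhm) p hp hfeas hcond'
      have hDup : ∀ μ : Fin m → ℝ, Dup Φ τ lam h μ =
          -(∑ i, τ i * μ i)
            + (⨆ z : ↥Xs × Fin K, ((∑ i, Φ z i * μ i) + (1 - h z.1 z.2)))
            + ∑ i, lam i * |μ i| := by
        intro μ
        have h1 : (⨆ z : ↥Xs × Fin K, ((∑ i, Φ z i * μ i) + (1 - h z.1 z.2)))
            = (⨆ z : ↥Xs × Fin K, ((∑ i, Φ z i * μ i) - h z.1 z.2)) + 1 := by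
          rw [← real_ciSup_add _ (hbdda μ) 1]
          congr 1
          funext z
          ring
        rw [Dup, h1]
        ring
      have hμu' : ∀ μ : Fin m → ℝ, Dup Φ τ lam h μu ≤ Dup Φ τ lam h μ := by
        intro μ
        rw [hDup μu, hDup μ]
        exact hμu μ
      exact ⟨μu, le_antisymm
        (le_ciInf fun μ => hμu' μ)
        (ciInf_le ⟨Dup Φ τ lam h μu, by rintro x ⟨μ, rfl⟩; exact hμu' μ⟩ μu)⟩

end
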